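/- Let p be a prime and G a finite non-abelian p-group which is an internal direct product G = H × K of normal subgroups with H nontrivial abelian and K non-abelian. Then G has a non-inner automorphism of order p fixing the Frattini subgroup Φ(G) elementwise. -/

import Mathlib

section Aux

variable {G : Type*} [Group G]

/-- An automorphism `g ↦ g * φ g` built from a homomorphism `φ : G →* G` whose image is
central and with `φ ∘ φ` trivial. -/
def autOfCentralHom (φ : G →* G) (hcen : ∀ g g', Commute (φ g) g')
    (h2 : ∀ g, φ (φ g) = 1) : G ≃* G where
  toFun g := g * φ g
  invFun g := g * (φ g)⁻¹
  left_inv g := by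
    have h : φ (g * φ g) = φ g := by rw [map_mul, h2, mul_one]
    simp [h]
  right_inv g := by
    have h : φ (g * (φ g)⁻¹) = φ g := by rw [map_mul, map_inv, h2, inv_one, mul_one]
    simp [h]
  map_mul' a b := by
    have h := (hcen a b).eq
    calc (a * b) * φ (a * b) = a * (φ a * b) * φ b := by
          rw [map_mul, h, mul_assoc, mul_assoc, mul_assoc]
      _ = a * φ a * (b * φ b) := by rw [mul_assoc, mul_assoc, mul_assoc]

lemma autOfCentralHom_apply (φ : G →* G) (hcen : ∀ g g', Commute (φ g) g')
    (h2 : ∀ g, φ (φ g) = 1) (g : G) : autOfCentralHom φ hcen h2 g = g * φ g := rfl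

lemma autOfCentralHom_pow_apply (φ : G →* G) (hcen : ∀ g g', Commute (φ g) g')
    (h2 : ∀ g, φ (φ g) = 1) (n : ℕ) (g : G) :
    ((autOfCentralHom φ hcen h2) ^ n) g = g * (φ g) ^ n := by
  induction n with
  | zero => simp
  | succ n ih =>
    rw [pow_succ', MulAut.mul_apply, ih, autOfCentralHom_apply, map_mul, map_pow, h2,
      one_pow, mul_one, mul_assoc, ← pow_succ]

/-- A subgroup of prime index is maximal. -/
lemma isCoatom_of_index_prime {p : ℕ} (hp : p.Prime) {N : Subgroup G}
    (h : N.index = p) : IsCoatom N := by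
  constructor
  · intro htop
    rw [htop, Subgroup.index_top] at h
    exact hp.one_lt.ne h
  · intro T hNT
    have hle : N ≤ T := hNT.le
    have hmul := Subgroup.relIndex_mul_index hle
    rw [h] at hmul
    have hdvd : T.index ∣ p := Dvd.intro_left _ hmul
    rcases (Nat.Prime.eq_one_or_self_of_dvd hp _ hdvd) with h1 | hP
    · exact Subgroup.index_eq_one.mp h1
    · exfalso
      rw [hP, Nat.mul_eq_right hp.ne_zero] at hmul
      exact hNT.not_ge (Subgroup.relIndex_eq_one.mp hmul)

end Aux

/-- A finite non-abelian p-group with a nontrivial abelian direct factor (and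
non-abelian complement) has a non-inner automorphism of order p fixing the
Frattini subgroup elementwise. -/
theorem noninner_aut_fixing_frattini_of_abelian_factor {p : ℕ} (hp : p.Prime)
    {G : Type*} [Group G] [Fintype G] (hpG : IsPGroup p G)
    (hG : ∃ a b : G, a * b ≠ b * a)
    (H K : Subgroup G) (hHn : H.Normal) (hKn : K.Normal)
    (hsup : H ⊔ K = ⊤) (hinf : H ⊓ K = ⊥)
    (hHnt : H ≠ ⊥) (hHab : ∀ a ∈ H, ∀ b ∈ H, a * b = b * a)
    (hKnab : ∃ a ∈ K, ∃ b ∈ K, a * b ≠ b * a) :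
    ∃ α : G ≃* G, orderOf α = p ∧ (¬ ∃ x : G, ∀ g : G, α g = x⁻¹ * g * x) ∧
      ∀ w ∈ frattini G, α w = w := by
  haveI : Fact p.Prime := ⟨hp⟩
  have hdis : Disjoint H K := disjoint_iff.mpr hinf
  -- elements of H and K commute
  have hcomm : ∀ x ∈ H, ∀ y ∈ K, Commute x y := fun x hx y hy =>
    Subgroup.commute_of_normal_of_disjoint H K hHn hKn hdis x y hx hy
  -- every element decomposes as h * k
  have hdec : ∀ g : G, ∃ h ∈ H, ∃ k ∈ K, g = h * k := by
    intro g
    have hg : g ∈ (↑(H ⊔ K) : Set G) := by rw [hsup]; trivial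
    rw [Subgroup.mul_normal] at hg
    obtain ⟨h, hh, k, hk, rfl⟩ := hg
    exact ⟨h, hh, k, hk, rfl⟩
  -- H is central
  have hHcen : ∀ x ∈ H, ∀ g : G, Commute x g := by
    intro x hx g
    obtain ⟨h, hh, k, hk, rfl⟩ := hdec g
    exact (Commute.mul_right (hHab x hx h hh) (hcomm x hx k hk))
  -- a central element z of order p inside K
  have hKp : IsPGroup p K := hpG.to_subgroup K
  haveI : Nontrivial K := by
    obtain ⟨a, ha, b, hb, hab⟩ := hKnab
    refine ⟨⟨a, ha⟩, 1, fun h => hab ?_⟩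
    have : a = 1 := by simpa using congrArg Subtype.val h
    simp [this]
  haveI := hKp.center_nontrivial
  have hZKp : IsPGroup p (Subgroup.center K) := hKp.to_subgroup _
  have hpdvd : p ∣ Nat.card (Subgroup.center K) := by
    obtain ⟨n, hn, hcard⟩ := hZKp.nontrivial_iff_card.mp inferInstance
    rw [hcard]
    exact dvd_pow_self p hn.ne'
  obtain ⟨ζ, hζ⟩ := exists_prime_orderOf_dvd_card' p hpdvd
  set z : G := ((ζ : K) : G) with hzdef
  have hzord : orderOf z = p := by
    rw [← hζ, Subgroup.orderOf_coe, Subgroup.orderOf_coe]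
  have hzK : z ∈ K := SetLike.coe_mem _
  have hzcen : ∀ g : G, Commute z g := by
    intro g
    obtain ⟨h, hh, k, hk, rfl⟩ := hdec g
    refine Commute.mul_right ((hcomm h hh z hzK).symm) ?_
    have := ζ.2
    rw [Subgroup.mem_center_iff] at this
    have h' := this ⟨k, hk⟩
    exact (congrArg Subtype.val h').symm
  have hzp : z ^ p = 1 := by rw [← hzord]; exact pow_orderOf_eq_one z
  -- projection π₀ : G →* H with kernel K
  have hψbij : Function.Bijective ((QuotientGroup.mk' K).comp H.subtype) := by
    constructor
    · intro a b hab
      have : ((a : G)⁻¹ * b : G) ∈ K := by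
        rw [MonoidHom.comp_apply, MonoidHom.comp_apply, QuotientGroup.mk'_apply,
          QuotientGroup.mk'_apply, QuotientGroup.eq] at hab
        exact hab
      have hH' : ((a : G)⁻¹ * b : G) ∈ H := H.mul_mem (H.inv_mem a.2) b.2
      have : ((a : G)⁻¹ * b : G) ∈ H ⊓ K := ⟨hH', this⟩
      rw [hinf, Subgroup.mem_bot] at this
      have : (a : G) = (b : G) := by
        rw [← mul_one (a : G), ← this, ← mul_assoc, mul_inv_cancel, one_mul]
      exact Subtype.ext this
    · intro q
      obtain ⟨g, rfl⟩ := QuotientGroup.mk'_surjective K q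
      obtain ⟨h, hh, k, hk, rfl⟩ := hdec g
      refine ⟨⟨h, hh⟩, ?_⟩
      simp only [MonoidHom.comp_apply, QuotientGroup.mk'_apply]
      have : ((k : G) : G ⧸ K) = 1 := (QuotientGroup.eq_one_iff k).mpr hk
      rw [QuotientGroup.mk_mul]
      simp only [this, mul_one]
      rfl
  set e : H ≃* G ⧸ K := MulEquiv.ofBijective _ hψbij with hedef
  set π₀ : G →* H := (e.symm.toMonoidHom).comp (QuotientGroup.mk' K) with hπdef
  have hπH : ∀ h : H, π₀ (h : G) = h := by
    intro h
    have : (QuotientGroup.mk' K) (h : G) = e h := rfl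
    simp only [hπdef, MonoidHom.comp_apply, this]
    exact e.symm_apply_apply h
  have hπK : ∀ k ∈ K, π₀ k = 1 := by
    intro k hk
    have : (QuotientGroup.mk' K) k = 1 := (QuotientGroup.eq_one_iff k).mpr hk
    simp only [hπdef, MonoidHom.comp_apply, this, map_one]
  -- a maximal subgroup M of H
  haveI : Nontrivial H := (Subgroup.nontrivial_iff_ne_bot H).mpr hHnt
  obtain hMex := (IsCoatomic.eq_top_or_exists_le_coatom (α := Subgroup H) ⊥)
  have hbotne : (⊥ : Subgroup H) ≠ ⊤ := by
    intro h
    obtain ⟨x, y, hxy⟩ := exists_pair_ne H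
    apply hxy
    have hx : x ∈ (⊥ : Subgroup H) := by rw [h]; trivial
    have hy : y ∈ (⊥ : Subgroup H) := by rw [h]; trivial
    rw [Subgroup.mem_bot] at hx hy
    rw [hx, hy]
  obtain ⟨M, hM, -⟩ := hMex.resolve_left hbotne
  haveI hMnormal : M.Normal := by
    constructor
    intro m hm g
    have : g * m * g⁻¹ = m := by
      have := hHab (g : G) g.2 (m : G) m.2
      have h' : (g : G) * m * (g : G)⁻¹ = m := by
        rw [this, mul_assoc, mul_inv_cancel, mul_one]
      exact Subtype.ext h'
    rwa [this]
  -- the quotient Q = H / M has order p with generator g₀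
  set Q := H ⧸ M with hQdef
  have hQp : IsPGroup p Q := (hpG.to_subgroup H).to_quotient M
  haveI : Nontrivial Q := by
    obtain ⟨h, -, hh⟩ := SetLike.exists_of_lt (lt_top_iff_ne_top.mpr hM.1)
    refine ⟨QuotientGroup.mk h, 1, fun hcon => hh ?_⟩
    exact (QuotientGroup.eq_one_iff h).mp hcon
  have hsimple : ∀ S : Subgroup Q, S = ⊥ ∨ S = ⊤ := by
    intro S
    have hker : M ≤ S.comap (QuotientGroup.mk' M) := by
      intro m hm
      have : (QuotientGroup.mk' M) m = 1 := (QuotientGroup.eq_one_iff m).mpr hm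
      rw [Subgroup.mem_comap, this]
      exact S.one_mem
    have hS : S = (S.comap (QuotientGroup.mk' M)).map (QuotientGroup.mk' M) :=
      (Subgroup.map_comap_eq_self_of_surjective (QuotientGroup.mk'_surjective M) S).symm
    rcases hker.lt_or_eq with hlt | heq
    · right
      rw [hS, hM.2 _ hlt]
      exact Subgroup.map_top_of_surjective _ (QuotientGroup.mk'_surjective M)
    · left
      rw [hS, ← heq]
      rw [Subgroup.map_eq_bot_iff, QuotientGroup.ker_mk']
  have hpdvdQ : p ∣ Nat.card Q := by
    obtain ⟨n, hn, hcard⟩ := hQp.nontrivial_iff_card.mp inferInstance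
    rw [hcard]; exact dvd_pow_self p hn.ne'
  obtain ⟨g₀, hg₀⟩ := exists_prime_orderOf_dvd_card' p hpdvdQ
  have hg₀ne : g₀ ≠ 1 := by
    intro h
    rw [h, orderOf_one] at hg₀
    exact hp.one_lt.ne' hg₀.symm
  have hgen : ∀ x : Q, x ∈ Subgroup.zpowers g₀ := by
    have := hsimple (Subgroup.zpowers g₀)
    rcases this with h | h
    · exact absurd ((Subgroup.mem_bot).mp (h ▸ Subgroup.mem_zpowers g₀)) hg₀ne
    · intro x; rw [h]; trivial
  have hcardQ : Nat.card Q = p := by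
    have h1 : Nat.card (Subgroup.zpowers g₀) = p := by rw [Nat.card_zpowers, hg₀]
    have h2 : (Subgroup.zpowers g₀ : Subgroup Q) = ⊤ := by
      rw [eq_top_iff]; intro x _; exact hgen x
    rw [← h1, h2]
    exact (Nat.card_congr Subgroup.topEquiv.toEquiv).symm
  -- the homomorphism c₀ : Q →* G sending g₀ to z
  have hzdvd : orderOf z ∣ orderOf g₀ := by rw [hzord, hg₀]
  set c₀ : Q →* G := monoidHomOfForallMemZpowers hgen hzdvd with hc₀def
  have hc₀gen : c₀ g₀ = z := monoidHomOfForallMemZpowers_apply_gen hgen hzdvd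
  have hc₀mem : ∀ x : Q, c₀ x ∈ Subgroup.zpowers z := by
    intro x
    obtain ⟨n, hn⟩ := hgen x
    rw [← hn, map_zpow, hc₀gen]
    exact Subgroup.zpow_mem _ (Subgroup.mem_zpowers z) n
  have hc₀inj : ∀ x : Q, c₀ x = 1 → x = 1 := by
    intro x hx
    obtain ⟨n, hn⟩ := hgen x
    rw [← hn, map_zpow, hc₀gen] at hx
    rw [← hn]
    rw [← orderOf_dvd_iff_zpow_eq_one] at hx ⊢
    rwa [hg₀, ← hzord]
  -- the homomorphism φ : G →* G
  set ρ₁ : G →* Q := (QuotientGroup.mk' M).comp π₀ with hρdef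
  set φ : G →* G := c₀.comp ρ₁ with hφdef
  have hφmem : ∀ g : G, φ g ∈ Subgroup.zpowers z := fun g => hc₀mem _
  have hφcen : ∀ g g' : G, Commute (φ g) g' := by
    intro g g'
    obtain ⟨n, hn⟩ := hφmem g
    rw [← hn]
    exact (hzcen g').zpow_left n
  have hφK : ∀ g : G, φ g ∈ K := by
    intro g
    obtain ⟨n, hn⟩ := hφmem g
    rw [← hn]
    exact K.zpow_mem hzK n
  have hφ2 : ∀ g : G, φ (φ g) = 1 := by
    intro g
    show c₀ (ρ₁ (φ g)) = 1
    have h1 : ρ₁ (φ g) = 1 := by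
      show (QuotientGroup.mk' M) (π₀ (φ g)) = 1
      rw [hπK _ (hφK g), map_one]
    rw [h1, map_one]
  have hφp : ∀ g : G, (φ g) ^ p = 1 := by
    intro g
    obtain ⟨n, hn⟩ := hφmem g
    rw [← hn, ← zpow_natCast (z ^ n) p, ← zpow_mul, mul_comm, zpow_mul, zpow_natCast, hzp,
      one_zpow]
  -- a witness on which φ is nontrivial
  obtain ⟨h₀, -, hh₀⟩ := SetLike.exists_of_lt (lt_top_iff_ne_top.mpr hM.1)
  have hφh₀ : φ ((h₀ : H) : G) ≠ 1 := by
    intro hcon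
    apply hh₀
    have h1 : ρ₁ ((h₀ : H) : G) = QuotientGroup.mk h₀ := by
      simp only [hρdef, MonoidHom.comp_apply, hπH h₀]
      rfl
    have h2 : c₀ (QuotientGroup.mk h₀) = 1 := by rw [← h1]; exact hcon
    have h3 := hc₀inj _ h2
    exact (QuotientGroup.eq_one_iff h₀).mp h3
  -- the automorphism α
  set α : G ≃* G := autOfCentralHom φ hφcen hφ2 with hαdef
  refine ⟨α, ?_, ?_, ?_⟩
  · -- order p
    refine orderOf_eq_prime ?_ ?_
    · ext g
      rw [MulAut.one_apply]
      show (α ^ p) g = g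
      rw [hαdef, autOfCentralHom_pow_apply, hφp, mul_one]
    · intro hcon
      apply hφh₀
      have := congrArg (fun β : G ≃* G => β ((h₀ : H) : G)) hcon
      simp only [hαdef, MulAut.one_apply] at this
      rw [autOfCentralHom_apply] at this
      exact (mul_eq_left).mp this
  · -- non-inner
    rintro ⟨x, hx⟩
    apply hφh₀
    have h1 := hx ((h₀ : H) : G)
    rw [hαdef, autOfCentralHom_apply] at h1
    have h2 : x⁻¹ * ((h₀ : H) : G) * x = ((h₀ : H) : G) := by
      have := (hHcen _ (h₀ : H).2 x⁻¹).eq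
      rw [← this, mul_assoc, inv_mul_cancel, mul_one]
    rw [h2] at h1
    exact (mul_eq_left).mp h1
  · -- fixes the Frattini subgroup
    intro w hw
    have hρsurj : Function.Surjective ρ₁ := by
      intro q
      obtain ⟨h, rfl⟩ := QuotientGroup.mk'_surjective M q
      exact ⟨(h : G), by simp only [hρdef, MonoidHom.comp_apply, hπH h]⟩
    have hidx : ρ₁.ker.index = p := by
      rw [Subgroup.index_ker]
      rw [MonoidHom.range_eq_top.mpr hρsurj]
      rw [Nat.card_congr Subgroup.topEquiv.toEquiv]
      exact hcardQ
    have hker : w ∈ ρ₁.ker :=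
      frattini_le_coatom (isCoatom_of_index_prime hp hidx) hw
    have hρw : ρ₁ w = 1 := hker
    have hφw : φ w = 1 := by
      simp only [hφdef, MonoidHom.comp_apply, hρw, map_one]
    rw [hαdef, autOfCentralHom_apply, hφw, mul_one]
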